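/- Let υ* > 0 and τ̃ > 0 and let a(t) = υ*·(t + τ̃·sin(t/τ̃)). Then for every t with a(t) ≠ 0, −a''(t)/a(t) = υ*²·((t/τ̃)·sin(t/τ̃) + sin²(t/τ̃))/a(t)². Consequently, the net gravitational mass density Δ = −(3/(4πG))·a''/a determined by the acceleration equation decomposes as Δ = Δ₊₊ + Δ₊₋ with Δ₊₊ = (3/(4πG))·υ*²·sin²(t/τ̃)/a(t)² ≥ 0 and Δ₊₋ = (3/(4πG))·υ*²·(t/τ̃)·sin(t/τ̃)/a(t)². -/

import Mathlib

open Real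

theorem gravitational_mass_density_decomposition
    (υ τr G : ℝ) (hυ : 0 < υ) (hτ : 0 < τr) (hG : 0 < G) :
    let a : ℝ → ℝ := fun t => υ * (t + τr * Real.sin (t / τr))
    let Δ : ℝ → ℝ := fun t => -(3 / (4 * π * G)) * (deriv (deriv a) t / a t)
    let Δpp : ℝ → ℝ := fun t => (3 / (4 * π * G)) * υ ^ 2 * (Real.sin (t / τr)) ^ 2 / (a t) ^ 2
    let Δpm : ℝ → ℝ := fun t => (3 / (4 * π * G)) * υ ^ 2 * ((t / τr) * Real.sin (t / τr)) / (a t) ^ 2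
    ∀ t : ℝ, a t ≠ 0 →
      (-(deriv (deriv a) t) / a t
          = υ ^ 2 * ((t / τr) * Real.sin (t / τr) + (Real.sin (t / τr)) ^ 2) / (a t) ^ 2) ∧
      Δ t = Δpp t + Δpm t ∧ 0 ≤ Δpp t := by
  intro a Δ Δpp Δpm t hat
  have hτ0 : τr ≠ 0 := hτ.ne'
  have hda : ∀ s : ℝ, HasDerivAt a (υ * (1 + Real.cos (s / τr))) s := by
    intro s
    have h1 : HasDerivAt (fun u : ℝ => u / τr) (1 / τr) s := by
      simpa using (hasDerivAt_id s).div_const τr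
    have h2 := (Real.hasDerivAt_sin (s / τr)).comp s h1
    have h3 := ((hasDerivAt_id s).add (h2.const_mul τr)).const_mul υ
    refine h3.congr_deriv ?_
    field_simp
  have hd1 : deriv a = fun s => υ * (1 + Real.cos (s / τr)) :=
    funext fun s => (hda s).deriv
  have hdd : deriv (deriv a) t = -(υ / τr) * Real.sin (t / τr) := by
    rw [hd1]
    have h1 : HasDerivAt (fun u : ℝ => u / τr) (1 / τr) t := by
      simpa using (hasDerivAt_id t).div_const τr
    have h2 := (Real.hasDerivAt_cos (t / τr)).comp t h1
    have h3 := ((hasDerivAt_const t (1 : ℝ)).add h2).const_mul υ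
    have h4 : HasDerivAt (fun s => υ * (1 + Real.cos (s / τr)))
        (-(υ / τr) * Real.sin (t / τr)) t := by
      refine h3.congr_deriv ?_
      field_simp
      ring
    exact h4.deriv
  have ha : a t = υ * (t + τr * Real.sin (t / τr)) := rfl
  have key : -(deriv (deriv a) t) / a t
      = υ ^ 2 * ((t / τr) * Real.sin (t / τr) + (Real.sin (t / τr)) ^ 2) / (a t) ^ 2 := by
    rw [hdd, ha]
    field_simp
  refine ⟨key, ?_, ?_⟩
  · show -(3 / (4 * π * G)) * (deriv (deriv a) t / a t) = _ + _
    have : deriv (deriv a) t / a t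
        = -(υ ^ 2 * ((t / τr) * Real.sin (t / τr) + (Real.sin (t / τr)) ^ 2) / (a t) ^ 2) := by
      rw [← key]; ring
    rw [this]
    show _ = (3 / (4 * π * G)) * υ ^ 2 * (Real.sin (t / τr)) ^ 2 / (a t) ^ 2
        + (3 / (4 * π * G)) * υ ^ 2 * ((t / τr) * Real.sin (t / τr)) / (a t) ^ 2
    ring
  · apply div_nonneg _ (sq_nonneg _)
    have hπ : 0 < π := Real.pi_pos
    positivity
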